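/- Let C ⊆ ℝⁿ be nonempty and closed, let h : ℝⁿ → ℝ be continuously differentiable and μ-strongly convex (μ > 0), and let x : [0,∞) → ℝⁿ be continuous. Suppose that for every c ∈ C the function t ↦ D_h(c, x(t)) is nonincreasing, and that there exist times t_k → ∞ and a point x* ∈ C with x(t_k) → x*. Then x(t) → x* as t → ∞; in particular, a trajectory that is Bregman-Fejér monotone with respect to C and asymptotically approaches C converges to a single point of C. -/

import Mathlib

open scoped RealInnerProductSpace

/-- First-order strong convexity inequality (Bregman divergence lower bound). -/
lemma strong_convex_bregman_lb {n : ℕ}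
    (h : EuclideanSpace ℝ (Fin n) → ℝ)
    (μ : ℝ)
    (hstrong : ConvexOn ℝ Set.univ (fun w => h w - μ / 2 * ‖w‖ ^ 2))
    (gh : EuclideanSpace ℝ (Fin n) → EuclideanSpace ℝ (Fin n))
    (hgrad : ∀ w, HasGradientAt h (gh w) w)
    (c y : EuclideanSpace ℝ (Fin n)) :
    μ / 2 * ‖c - y‖ ^ 2 ≤ h c - h y - ⟪gh y, c - y⟫ := by
  set v := c - y with hv
  set φ : ℝ → ℝ := fun s => h (y + s • v) - μ / 2 * ‖y + s • v‖ ^ 2 with hφ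
  -- convexity of φ on univ
  have haff : (fun s : ℝ => y + s • v) = fun s => (AffineMap.lineMap y c : ℝ →ᵃ[ℝ] _) s := by
    funext s
    simp [AffineMap.lineMap_apply, hv]
    module
  have hφconv : ConvexOn ℝ Set.univ φ := by
    have := hstrong.comp_affineMap (AffineMap.lineMap y c : ℝ →ᵃ[ℝ] _)
    simp only [Set.preimage_univ] at this
    suffices e : φ = (fun w => h w - μ / 2 * ‖w‖ ^ 2) ∘ ⇑(AffineMap.lineMap y c : ℝ →ᵃ[ℝ] _) by
      rw [e]; exact this
    funext s
    have := congrFun haff s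
    simp only [φ, Function.comp_apply, this]
  -- derivative of φ at 0
  have hline : HasDerivAt (fun s : ℝ => y + s • v) v 0 := by
    have : HasDerivAt (fun s : ℝ => s • v) ((1 : ℝ) • v) 0 :=
      (hasDerivAt_id 0).smul_const v
    simpa using this.const_add y
  have hA : HasDerivAt (fun s : ℝ => h (y + s • v)) ⟪gh y, v⟫ 0 := by
    have h0v : y + (0:ℝ) • v = y := by simp
    have hF : HasFDerivAt h
        ((InnerProductSpace.toDual ℝ (EuclideanSpace ℝ (Fin n))) (gh y)) (y + (0:ℝ) • v) := by
      rw [h0v]; exact hasGradientAt_iff_hasFDerivAt.mp (hgrad y)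
    have := hF.comp_hasDerivAt 0 hline
    simpa [Function.comp_def] using this
  have hq : HasDerivAt (fun s : ℝ => ‖y + s • v‖ ^ 2) (2 * ⟪y, v⟫) 0 := by
    have heq : (fun s : ℝ => ‖y + s • v‖ ^ 2)
        = fun s => ‖y‖ ^ 2 + 2 * ⟪y, v⟫ * s + ‖v‖ ^ 2 * s ^ 2 := by
      funext s
      rw [norm_add_sq_real, real_inner_smul_right, norm_smul]
      simp [mul_pow, sq_abs]
      ring
    rw [heq]
    have h1 : HasDerivAt (fun s : ℝ => ‖y‖ ^ 2 + 2 * ⟪y, v⟫ * s) (2 * ⟪y, v⟫) 0 := by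
      simpa using ((hasDerivAt_id (0:ℝ)).const_mul (2 * ⟪y, v⟫)).const_add (‖y‖ ^ 2)
    have h2 : HasDerivAt (fun s : ℝ => ‖v‖ ^ 2 * s ^ 2) (‖v‖ ^ 2 * (2 * 0)) 0 := by
      simpa using ((hasDerivAt_pow 2 (0:ℝ))).const_mul (‖v‖ ^ 2)
    simpa [Pi.add_def] using h1.add h2
  have hφ' : HasDerivAt φ (⟪gh y, v⟫ - μ / 2 * (2 * ⟪y, v⟫)) 0 :=
    hA.sub (hq.const_mul (μ / 2))
  have hslope := hφconv.le_slope_of_hasDerivAt (Set.mem_univ 0) (Set.mem_univ 1)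
    zero_lt_one hφ'
  have hs : slope φ 0 1 = φ 1 - φ 0 := by simp [slope_def_field]
  rw [hs] at hslope
  have hyc : y + (1:ℝ) • v = c := by rw [hv]; module
  have h1 : φ 1 = h c - μ / 2 * ‖c‖ ^ 2 := by simp only [φ, hyc]
  have h0 : φ 0 = h y - μ / 2 * ‖y‖ ^ 2 := by simp [φ]
  rw [h1, h0] at hslope
  have hnorm : ‖c - y‖ ^ 2 = ‖c‖ ^ 2 - 2 * ⟪c, y⟫ + ‖y‖ ^ 2 := by
    rw [norm_sub_sq_real]
  have hinner : ⟪gh y, c - y⟫ = ⟪gh y, v⟫ := by rw [hv]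
  have hyv : ⟪y, v⟫ = ⟪c, y⟫ - ‖y‖ ^ 2 := by
    rw [hv, inner_sub_right, real_inner_self_eq_norm_sq, real_inner_comm]
  rw [hinner, hnorm]
  rw [hyv] at hslope
  nlinarith [hslope]

theorem bregman_fejer_monotone_convergence
    (n : ℕ) (C : Set (EuclideanSpace ℝ (Fin n)))
    (hCne : C.Nonempty) (hCcl : IsClosed C)
    (h : EuclideanSpace ℝ (Fin n) → ℝ)
    (hh : ContDiff ℝ 1 h)
    (μ : ℝ) (hμ : 0 < μ)
    (hstrong : ConvexOn ℝ Set.univ (fun w => h w - μ / 2 * ‖w‖ ^ 2))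
    (gh : EuclideanSpace ℝ (Fin n) → EuclideanSpace ℝ (Fin n))
    (hgrad : ∀ w, HasGradientAt h (gh w) w)
    (x : ℝ → EuclideanSpace ℝ (Fin n))
    (hxcont : ContinuousOn x (Set.Ici 0))
    (hfejer : ∀ c ∈ C,
      AntitoneOn (fun t => h c - h (x t) - ⟪gh (x t), c - x t⟫) (Set.Ici 0))
    (tk : ℕ → ℝ) (htk0 : ∀ k, 0 ≤ tk k)
    (htk : Filter.Tendsto tk Filter.atTop Filter.atTop)
    (xstar : EuclideanSpace ℝ (Fin n)) (hxstar : xstar ∈ C)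
    (hconv : Filter.Tendsto (fun k => x (tk k)) Filter.atTop (nhds xstar)) :
    Filter.Tendsto x Filter.atTop (nhds xstar) := by
  set D : ℝ → ℝ := fun t => h xstar - h (x t) - ⟪gh (x t), xstar - x t⟫ with hD
  have hanti := hfejer xstar hxstar
  -- gh is continuous
  have hghcont : Continuous gh := by
    have heq : gh = fun w =>
        (InnerProductSpace.toDual ℝ (EuclideanSpace ℝ (Fin n))).symm (fderiv ℝ h w) := by
      funext w
      have hf := (hasGradientAt_iff_hasFDerivAt.mp (hgrad w)).fderiv
      rw [hf]
      simp
    rw [heq]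
    exact (InnerProductSpace.toDual ℝ
      (EuclideanSpace ℝ (Fin n))).symm.continuous.comp (hh.continuous_fderiv one_ne_zero)
  -- D(tk k) → 0
  have hFcont : Continuous (fun w => h xstar - h w - ⟪gh w, xstar - w⟫) := by
    apply (continuous_const.sub (hh.continuous)).sub
    exact (hghcont.inner (continuous_const.sub continuous_id))
  have hDtk : Filter.Tendsto (fun k => D (tk k)) Filter.atTop (nhds 0) := by
    have := (hFcont.tendsto xstar).comp hconv
    simpa [hD, Function.comp_def] using this
  -- lower bound
  have hlb : ∀ t, μ / 2 * ‖xstar - x t‖ ^ 2 ≤ D t := fun t =>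
    strong_convex_bregman_lb h μ hstrong gh hgrad xstar (x t)
  have hDnonneg : ∀ t, 0 ≤ D t := fun t =>
    le_trans (by positivity) (hlb t)
  -- D → 0 at infinity
  have hDto0 : Filter.Tendsto D Filter.atTop (nhds 0) := by
    rw [Metric.tendsto_atTop]
    intro ε hε
    have : ∀ᶠ k in Filter.atTop, D (tk k) < ε := by
      have := hDtk (Metric.ball_mem_nhds 0 hε)
      filter_upwards [this] with k hk
      simpa [abs_of_nonneg (hDnonneg (tk k))] using hk
    rcases this.exists with ⟨K, hK⟩
    refine ⟨tk K, fun t ht => ?_⟩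
    have ht0 : (0:ℝ) ≤ t := le_trans (htk0 K) ht
    have hle : D t ≤ D (tk K) := hanti (Set.mem_Ici.mpr (htk0 K)) (Set.mem_Ici.mpr ht0) ht
    rw [Real.dist_eq, sub_zero, abs_of_nonneg (hDnonneg t)]
    exact lt_of_le_of_lt hle hK
  -- squeeze: ‖xstar - x t‖^2 → 0
  have hsq : Filter.Tendsto (fun t => ‖xstar - x t‖ ^ 2) Filter.atTop (nhds 0) := by
    have hub : ∀ t, ‖xstar - x t‖ ^ 2 ≤ (2 / μ) * D t := fun t => by
      have := hlb t
      have hμ' : 0 < μ / 2 := by positivity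
      calc ‖xstar - x t‖ ^ 2 = (2 / μ) * (μ / 2 * ‖xstar - x t‖ ^ 2) := by
            field_simp
        _ ≤ (2 / μ) * D t := by
            apply mul_le_mul_of_nonneg_left (hlb t) (by positivity)
    have hub0 : Filter.Tendsto (fun t => (2 / μ) * D t) Filter.atTop (nhds 0) := by
      simpa using hDto0.const_mul (2 / μ)
    exact squeeze_zero (fun t => by positivity) hub hub0
  -- conclude
  rw [tendsto_iff_dist_tendsto_zero]
  have : Filter.Tendsto (fun t => ‖xstar - x t‖) Filter.atTop (nhds 0) := by
    have hsqrt := (Real.continuous_sqrt.tendsto 0).comp hsq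
    simp only [Function.comp_def, Real.sqrt_zero] at hsqrt
    convert hsqrt using 2 with t
    rw [Real.sqrt_sq (norm_nonneg _)]
  convert this using 2 with t
  rw [dist_eq_norm, norm_sub_rev]
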